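/- Let R be a commutative Krasner hyperring with nonzero identity, N a proper hyperideal of R, and φ : L(R) → L(R) ∪ {∅} a function with φ(N) ⊆ N. Then the following are equivalent: (i) N is a φ-primary hyperideal of R; (ii) for every a ∈ R − √N, (N : a) = N ∪ (φ(N) : a); (iii) for every a ∈ R − √N, (N : a) = N or (N : a) = (φ(N) : a); (iv) for all hyperideals K, L of R with K∘L ⊆ N and K∘L ⊄ φ(N), either K ⊆ N or L ⊆ √N. -/

import Mathlib

universe u

/-- A commutative Krasner hyperring with nonzero identity. -/
class KrasnerHyperring (R : Type u) where
  hadd : R → R → Set R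
  mul : R → R → R
  zero : R
  one : R
  neg : R → R
  hadd_nonempty : ∀ a b : R, (hadd a b).Nonempty
  hadd_comm : ∀ a b : R, hadd a b = hadd b a
  hadd_assoc : ∀ a b c : R, (⋃ x ∈ hadd a b, hadd x c) = ⋃ y ∈ hadd b c, hadd a y
  hadd_zero : ∀ a : R, hadd a zero = {a}
  zero_mem_hadd_neg : ∀ a : R, zero ∈ hadd a (neg a)
  neg_unique : ∀ a b : R, zero ∈ hadd a b → b = neg a
  reversible : ∀ a b c : R, c ∈ hadd a b → b ∈ hadd (neg a) c
  mul_assoc : ∀ a b c : R, mul (mul a b) c = mul a (mul b c)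
  mul_comm : ∀ a b : R, mul a b = mul b a
  mul_one : ∀ a : R, mul a one = a
  mul_zero : ∀ a : R, mul a zero = zero
  one_ne_zero : one ≠ zero
  distrib : ∀ a b c : R, (fun x => mul a x) '' hadd b c = hadd (mul a b) (mul a c)

namespace KrasnerHyperring

variable {R : Type u} [KrasnerHyperring R]

/-- A hyperideal of a Krasner hyperring. -/
structure Hyperideal (R : Type u) [KrasnerHyperring R] where
  carrier : Set R
  nonempty' : carrier.Nonempty
  hadd_subset' : ∀ a ∈ carrier, ∀ b ∈ carrier, hadd a b ⊆ carrier
  neg_mem' : ∀ a ∈ carrier, neg a ∈ carrier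
  mul_mem' : ∀ r : R, ∀ a ∈ carrier, mul r a ∈ carrier

instance : SetLike (Hyperideal R) R where
  coe := Hyperideal.carrier
  coe_injective := by rintro ⟨⟩ ⟨⟩ h; congr

/-- A hyperideal is proper if it is not the whole hyperring. -/
def Hyperideal.IsProper (N : Hyperideal R) : Prop := (N : Set R) ≠ Set.univ

/-- `A ⊕ B` for subsets. -/
def haddSet (A B : Set R) : Set R := ⋃ a ∈ A, ⋃ b ∈ B, hadd a b

/-- `A ∘ B` : set of all products. -/
def mulSet (A B : Set R) : Set R := {x : R | ∃ a ∈ A, ∃ b ∈ B, x = mul a b}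

/-- The hyperideal generated by a set (as a set). -/
def genIdeal (S : Set R) : Set R := ⋂₀ {C : Set R | (∃ I : Hyperideal R, C = ↑I) ∧ S ⊆ C}

/-- Products of `n` elements of `S`. -/
def setPow (S : Set R) : ℕ → Set R
  | 0 => Set.univ
  | 1 => S
  | (n+2) => mulSet S (setPow S (n+1))

/-- `N^n` : the hyperideal generated by products of `n` elements of `N`. -/
def idealPow (N : Hyperideal R) (n : ℕ) : Set R := genIdeal (setPow (↑N) n)

/-- Powers of an element. -/
def hpow (a : R) : ℕ → R
  | 0 => one
  | (n+1) => mul a (hpow a n)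

/-- The radical of a set. -/
def radical (A : Set R) : Set R := {a : R | ∃ n : ℕ, 0 < n ∧ hpow a n ∈ A}

/-- `(A : a)`. -/
def colon (A : Set R) (a : R) : Set R := {r : R | mul a r ∈ A}

/-- `(A : M)` for a set `M`. -/
def colonSet (A B : Set R) : Set R := {r : R | ∀ b ∈ B, mul r b ∈ A}

/-- Prime hyperideal. -/
def IsPrime (N : Hyperideal R) : Prop :=
  N.IsProper ∧ ∀ a b : R, mul a b ∈ N → a ∈ N ∨ b ∈ N

/-- Weakly prime hyperideal. -/
def IsWeaklyPrime (N : Hyperideal R) : Prop :=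
  N.IsProper ∧ ∀ a b : R, mul a b ∈ N → mul a b ≠ zero → a ∈ N ∨ b ∈ N

/-- `φ`-prime hyperideal. -/
def IsPhiPrime (φ : Hyperideal R → Set R) (N : Hyperideal R) : Prop :=
  N.IsProper ∧ ∀ a b : R, mul a b ∈ N → mul a b ∉ φ N → a ∈ N ∨ b ∈ N

/-- Primary hyperideal. -/
def IsPrimary (N : Hyperideal R) : Prop :=
  N.IsProper ∧ ∀ a b : R, mul a b ∈ N → a ∈ N ∨ ∃ k : ℕ, 0 < k ∧ hpow b k ∈ N

/-- `φ`-primary hyperideal. -/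
def IsPhiPrimary (φ : Hyperideal R → Set R) (N : Hyperideal R) : Prop :=
  N.IsProper ∧ ∀ a b : R, mul a b ∈ N → mul a b ∉ φ N →
    a ∈ N ∨ ∃ k : ℕ, 0 < k ∧ hpow b k ∈ N

/-- `δ`-primary hyperideal. -/
def IsDeltaPrimary (δ : Hyperideal R → Hyperideal R) (N : Hyperideal R) : Prop :=
  N.IsProper ∧ ∀ a b : R, mul a b ∈ N → a ∈ N ∨ b ∈ δ N

/-- `φ`-`δ`-primary hyperideal. -/
def IsPhiDeltaPrimary (φ : Hyperideal R → Set R) (δ : Hyperideal R → Hyperideal R)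
    (N : Hyperideal R) : Prop :=
  N.IsProper ∧ ∀ a b : R, mul a b ∈ N → mul a b ∉ φ N → a ∈ N ∨ b ∈ δ N

/-- `φ : L(R) → L(R) ∪ {∅}` : every value is a hyperideal or the empty set. -/
def MapsToIdealOrEmpty (φ : Hyperideal R → Set R) : Prop :=
  ∀ I : Hyperideal R, φ I = ∅ ∨ ∃ J : Hyperideal R, φ I = ↑J

/-- A reduction function. -/
def IsReduction (φ : Hyperideal R → Set R) : Prop :=
  MapsToIdealOrEmpty φ ∧ (∀ I : Hyperideal R, φ I ⊆ ↑I) ∧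
    ∀ I J : Hyperideal R, (I : Set R) ⊆ ↑J → φ I ⊆ φ J

/-- An expansion function. -/
def IsExpansion (δ : Hyperideal R → Hyperideal R) : Prop :=
  (∀ I : Hyperideal R, (I : Set R) ⊆ ↑(δ I)) ∧
    ∀ I J : Hyperideal R, (I : Set R) ⊆ ↑J → (δ I : Set R) ⊆ ↑(δ J)

/-- `φ_w(N) = ⋂_{n ≥ 1} N^n`. -/
def phiW (N : Hyperideal R) : Set R := ⋂ (n : ℕ) (_ : 1 ≤ n), idealPow N n

lemma zero_mem (N : Hyperideal R) : zero ∈ N := by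
  obtain ⟨a, ha⟩ := N.nonempty'
  exact N.hadd_subset' a ha (neg a) (N.neg_mem' a ha) (zero_mem_hadd_neg a)

lemma proper_of_subset_proper {M T : Hyperideal R} (h : (M : Set R) ⊆ ↑T)
    (hT : T.IsProper) : M.IsProper :=
  fun hu => hT (Set.univ_subset_iff.mp (hu ▸ h))

section Aux

lemma hadd_comm_mem {a b c : R} (h : c ∈ hadd a b) : c ∈ hadd b a := by
  rw [hadd_comm]; exact h

lemma neg_neg' (a : R) : neg (neg a) = a :=
  (neg_unique (neg a) a (hadd_comm_mem (zero_mem_hadd_neg a))).symm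

lemma mul_neg' (a b : R) : mul a (neg b) = neg (mul a b) := by
  have h : mul a zero ∈ (fun x => mul a x) '' hadd b (neg b) :=
    ⟨zero, zero_mem_hadd_neg b, rfl⟩
  rw [distrib, mul_zero] at h
  exact neg_unique _ _ h

/-- Cancellation in a set closed under negation and hyperaddition. -/
lemma mem_hadd_cancel {C : Set R} (hne : ∀ a ∈ C, neg a ∈ C)
    (hcl : ∀ a ∈ C, ∀ b ∈ C, hadd a b ⊆ C) {p q z : R}
    (hz : z ∈ hadd p q) (hzC : z ∈ C) (hq : q ∈ C) : p ∈ C :=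
  hcl _ (hne q hq) _ hzC (reversible q p z (hadd_comm_mem hz))

lemma ideal_neg_mem (J : Hyperideal R) : ∀ a ∈ (J : Set R), neg a ∈ (J : Set R) :=
  J.neg_mem'

lemma ideal_hadd_subset (J : Hyperideal R) :
    ∀ a ∈ (J : Set R), ∀ b ∈ (J : Set R), hadd a b ⊆ (J : Set R) :=
  J.hadd_subset'

lemma colon_neg_mem (J : Hyperideal R) (a : R) :
    ∀ x ∈ colon (J : Set R) a, neg x ∈ colon (J : Set R) a := by
  intro x hx
  show mul a (neg x) ∈ (J : Set R)
  rw [mul_neg']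
  exact J.neg_mem' _ hx

lemma colon_hadd_subset (J : Hyperideal R) (a : R) :
    ∀ x ∈ colon (J : Set R) a, ∀ y ∈ colon (J : Set R) a,
      hadd x y ⊆ colon (J : Set R) a := by
  intro x hx y hy z hz
  show mul a z ∈ (J : Set R)
  have h : mul a z ∈ (fun t => mul a t) '' hadd x y := ⟨z, hz, rfl⟩
  rw [distrib] at h
  exact J.hadd_subset' _ hx _ hy h

lemma hpow_one' (a : R) : hpow a 1 = a := mul_one a

lemma hpow_add' (a : R) (m n : ℕ) : hpow a (m + n) = mul (hpow a m) (hpow a n) := by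
  induction m with
  | zero => simp only [Nat.zero_add, hpow]; rw [mul_comm, mul_one]
  | succ k ih =>
      have : k + 1 + n = (k + n) + 1 := by omega
      rw [this]
      show mul a (hpow a (k + n)) = mul (mul a (hpow a k)) (hpow a n)
      rw [ih, mul_assoc]

lemma hpow_neg' (a : R) (n : ℕ) :
    hpow (neg a) n = hpow a n ∨ hpow (neg a) n = neg (hpow a n) := by
  induction n with
  | zero => left; rfl
  | succ k ih =>
      rcases ih with h | h
      · right
        show mul (neg a) (hpow (neg a) k) = neg (mul a (hpow a k))
        rw [h, mul_comm, mul_neg', mul_comm]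
      · left
        show mul (neg a) (hpow (neg a) k) = mul a (hpow a k)
        rw [h, mul_comm, mul_neg', mul_comm (neg (hpow a k)) a, mul_neg', neg_neg']

lemma radical_neg_mem (N : Hyperideal R) {a : R} (h : a ∈ radical (N : Set R)) :
    neg a ∈ radical (N : Set R) := by
  obtain ⟨n, hn, hmem⟩ := h
  refine ⟨n, hn, ?_⟩
  rcases hpow_neg' a n with he | he <;> rw [he]
  · exact hmem
  · exact N.neg_mem' _ hmem

lemma mul_rearrange (a b c : R) : mul (mul a b) c = mul (mul a c) b := by
  rw [mul_assoc, mul_comm b c, ← mul_assoc]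

/-- Additive span of a set. -/
inductive HSpan (S : Set R) : R → Prop
  | base : ∀ {w}, w ∈ S → HSpan S w
  | add : ∀ {u v w}, HSpan S u → HSpan S v → w ∈ hadd u v → HSpan S w

lemma hspan_mem (N : Hyperideal R) {S : Set R} (hS : S ⊆ (N : Set R)) {w : R}
    (h : HSpan S w) : w ∈ (N : Set R) := by
  induction h with
  | base h => exact hS h
  | add _ _ hw ihu ihv => exact N.hadd_subset' _ ihu _ ihv hw

/-- Degree-`k` monomials in `x, y`. -/
def Mset (x y : R) (k : ℕ) : Set R :=
  {w | ∃ i j : ℕ, i + j = k ∧ w = mul (hpow x i) (hpow y j)}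

lemma hspan_mul_step {x y z : R} (hz : z ∈ hadd x y) {k : ℕ} {w : R}
    (h : HSpan (Mset x y k) w) : HSpan (Mset x y (k + 1)) (mul z w) := by
  induction h with
  | @base w hw =>
      obtain ⟨i, j, hij, rfl⟩ := hw
      have himg : mul (mul (hpow x i) (hpow y j)) z ∈
          (fun t => mul (mul (hpow x i) (hpow y j)) t) '' hadd x y :=
        ⟨z, hz, rfl⟩
      rw [distrib] at himg
      rw [mul_comm]
      refine HSpan.add (HSpan.base ?_) (HSpan.base ?_) himg
      · refine ⟨i + 1, j, by omega, ?_⟩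
        show mul (mul (hpow x i) (hpow y j)) x = mul (mul x (hpow x i)) (hpow y j)
        rw [mul_rearrange, mul_comm (hpow x i) x]
      · refine ⟨i, j + 1, by omega, ?_⟩
        show mul (mul (hpow x i) (hpow y j)) y = mul (hpow x i) (mul y (hpow y j))
        rw [mul_assoc, mul_comm (hpow y j) y]
  | @add u v w _ _ hw ihu ihv =>
      have himg : mul z w ∈ (fun t => mul z t) '' hadd u v := ⟨w, hw, rfl⟩
      rw [distrib] at himg
      exact HSpan.add ihu ihv himg

lemma hpow_mem_hspan {x y z : R} (hz : z ∈ hadd x y) :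
    ∀ k : ℕ, HSpan (Mset x y k) (hpow z k) := by
  intro k
  induction k with
  | zero => exact HSpan.base ⟨0, 0, rfl, (mul_one one).symm⟩
  | succ k ih => exact hspan_mul_step hz ih

lemma radical_hadd_subset (N : Hyperideal R) {x y : R}
    (hx : x ∈ radical (N : Set R)) (hy : y ∈ radical (N : Set R)) :
    hadd x y ⊆ radical (N : Set R) := by
  obtain ⟨n, hn, hxn⟩ := hx
  obtain ⟨m, hm, hym⟩ := hy
  intro z hz
  refine ⟨n + m, by omega, ?_⟩
  refine hspan_mem N ?_ (hpow_mem_hspan hz (n + m))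
  rintro w ⟨i, j, hij, rfl⟩
  rcases le_or_gt n i with hi | hi
  · have hx' : hpow x i = mul (hpow x (i - n)) (hpow x n) := by
      rw [← hpow_add']; congr 1; omega
    rw [hx', mul_rearrange]
    exact N.mul_mem' _ _ hxn
  · have hj : m ≤ j := by omega
    have hy' : hpow y j = mul (hpow y (j - m)) (hpow y m) := by
      rw [← hpow_add']; congr 1; omega
    rw [hy', ← mul_assoc]
    exact N.mul_mem' _ _ hym

/-- The principal hyperideal generated by `a`. -/
def principal (a : R) : Hyperideal R where
  carrier := {x | ∃ r : R, x = mul r a}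
  nonempty' := ⟨a, one, by rw [mul_comm, mul_one]⟩
  hadd_subset' := by
    rintro x ⟨r, rfl⟩ y ⟨s, rfl⟩ z hz
    have he : hadd (mul r a) (mul s a) = (fun t => mul a t) '' hadd r s := by
      rw [distrib, mul_comm a r, mul_comm a s]
    rw [he] at hz
    obtain ⟨t, _, rfl⟩ := hz
    exact ⟨t, mul_comm a t⟩
  neg_mem' := by
    rintro x ⟨r, rfl⟩
    exact ⟨neg r, by rw [mul_comm (neg r) a, mul_neg', mul_comm a r]⟩
  mul_mem' := by
    rintro s x ⟨r, rfl⟩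
    exact ⟨mul s r, (mul_assoc s r a).symm⟩

lemma mem_principal_self (a : R) : a ∈ (principal a : Set R) :=
  ⟨one, by rw [mul_comm, mul_one]⟩

end Aux

/-- STATEMENT 12: characterizations of `φ`-primary hyperideals. -/
theorem phiPrimary_characterizations {R : Type u} [KrasnerHyperring R]
    (φ : Hyperideal R → Set R) (hφ : MapsToIdealOrEmpty φ)
    (N : Hyperideal R) (hN : N.IsProper) (hφN : φ N ⊆ (N : Set R)) :
    (IsPhiPrimary φ N ↔
      ∀ a : R, a ∉ radical (N : Set R) →
        colon (N : Set R) a = (N : Set R) ∪ colon (φ N) a) ∧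
    (IsPhiPrimary φ N ↔
      ∀ a : R, a ∉ radical (N : Set R) →
        colon (N : Set R) a = (N : Set R) ∨ colon (N : Set R) a = colon (φ N) a) ∧
    (IsPhiPrimary φ N ↔
      ∀ K L : Hyperideal R, mulSet (K : Set R) (L : Set R) ⊆ (N : Set R) →
        ¬ mulSet (K : Set R) (L : Set R) ⊆ φ N →
        (K : Set R) ⊆ (N : Set R) ∨ (L : Set R) ⊆ radical (N : Set R)) := by
  -- (i) → (ii)
  have h12 : IsPhiPrimary φ N →
      ∀ a : R, a ∉ radical (N : Set R) →
        colon (N : Set R) a = (N : Set R) ∪ colon (φ N) a := by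
    intro hP a ha
    apply Set.Subset.antisymm
    · intro r hr
      by_cases hr2 : mul a r ∈ φ N
      · exact Or.inr hr2
      · rcases hP.2 r a (by rwa [mul_comm r a]) (by rwa [mul_comm r a]) with h | ⟨k, hk, hbk⟩
        · exact Or.inl h
        · exact absurd ⟨k, hk, hbk⟩ ha
    · rintro r (hr | hr)
      · exact N.mul_mem' a r hr
      · exact hφN hr
  -- (ii) → (iii)
  have h23 : (∀ a : R, a ∉ radical (N : Set R) →
        colon (N : Set R) a = (N : Set R) ∪ colon (φ N) a) →
      ∀ a : R, a ∉ radical (N : Set R) →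
        colon (N : Set R) a = (N : Set R) ∨ colon (N : Set R) a = colon (φ N) a := by
    intro h2 a ha
    have heq := h2 a ha
    rcases hφ N with hemp | ⟨J, hJ⟩
    · left
      have hc : colon (φ N) a = (∅ : Set R) := by
        rw [hemp]; ext r; simp [colon]
      rw [heq, hc, Set.union_empty]
    · have hcolφ : colon (φ N) a ⊆ colon (N : Set R) a := fun r hr => hφN hr
      by_cases hsub : colon (N : Set R) a ⊆ colon (φ N) a
      · exact Or.inr (Set.Subset.antisymm hsub hcolφ)
      · left
        refine Set.Subset.antisymm ?_ (fun r hr => N.mul_mem' a r hr)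
        obtain ⟨x, hxN, hxφ⟩ := Set.not_subset.mp hsub
        have hxNmem : x ∈ (N : Set R) := by
          rcases heq ▸ hxN with h | h
          · exact h
          · exact absurd h hxφ
        intro y hy
        rcases heq ▸ hy with h | h
        · exact h
        · -- y ∈ colon (φ N) a; show y ∈ N
          by_contra hyN
          obtain ⟨z, hz⟩ := hadd_nonempty x y
          have hzc : z ∈ colon (N : Set R) a :=
            colon_hadd_subset N a x hxN y hy hz
          rcases heq ▸ hzc with hzn | hzφ
          · -- y ∈ hadd (neg x) z ⊆ N
            exact hyN (mem_hadd_cancel (ideal_neg_mem N) (ideal_hadd_subset N)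
              (hadd_comm_mem hz) hzn hxNmem)
          · -- x ∈ hadd (neg y) z ⊆ colon (φ N) a
            apply hxφ
            rw [hJ] at h hzφ ⊢
            exact mem_hadd_cancel (colon_neg_mem J a) (colon_hadd_subset J a)
              hz hzφ h
  -- (iii) → (i)
  have h31 : (∀ a : R, a ∉ radical (N : Set R) →
        colon (N : Set R) a = (N : Set R) ∨ colon (N : Set R) a = colon (φ N) a) →
      IsPhiPrimary φ N := by
    intro h3
    refine ⟨hN, ?_⟩
    intro a b hab hnφ
    by_cases hb : b ∈ radical (N : Set R)
    · exact Or.inr hb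
    · have hacol : a ∈ colon (N : Set R) b := by
        show mul b a ∈ (N : Set R); rwa [mul_comm b a]
      rcases h3 b hb with h | h
      · rw [h] at hacol; exact Or.inl hacol
      · rw [h] at hacol
        have : mul b a ∈ φ N := hacol
        rw [mul_comm b a] at this
        exact absurd this hnφ
  -- (i) → (iv)
  have h14 : IsPhiPrimary φ N →
      ∀ K L : Hyperideal R, mulSet (K : Set R) (L : Set R) ⊆ (N : Set R) →
        ¬ mulSet (K : Set R) (L : Set R) ⊆ φ N →
        (K : Set R) ⊆ (N : Set R) ∨ (L : Set R) ⊆ radical (N : Set R) := by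
    intro hP K L hKL hnsub
    by_contra hcon
    push_neg at hcon
    obtain ⟨hK, hL⟩ := hcon
    obtain ⟨a0, ha0K, ha0N⟩ := Set.not_subset.mp hK
    obtain ⟨b0, hb0L, hb0r⟩ := Set.not_subset.mp hL
    have hmem : ∀ a ∈ (K : Set R), ∀ b ∈ (L : Set R), mul a b ∈ (N : Set R) :=
      fun a ha b hb => hKL ⟨a, ha, b, hb, rfl⟩
    have key0 : ∀ a ∈ (K : Set R), a ∉ (N : Set R) →
        ∀ b ∈ (L : Set R), b ∉ radical (N : Set R) → mul a b ∈ φ N := by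
      intro a haK haN b hbL hbr
      by_contra h
      rcases hP.2 a b (hmem a haK b hbL) h with h' | h'
      · exact haN h'
      · exact hbr h'
    have hφ0 : mul a0 b0 ∈ φ N := key0 a0 ha0K ha0N b0 hb0L hb0r
    obtain ⟨J, hJ⟩ : ∃ J : Hyperideal R, φ N = (J : Set R) := by
      rcases hφ N with hemp | h
      · rw [hemp] at hφ0; exact absurd hφ0 (Set.notMem_empty _)
      · exact h
    have key1 : ∀ a ∈ (K : Set R), a ∉ (N : Set R) →
        ∀ b ∈ (L : Set R), mul a b ∈ φ N := by
      intro a haK haN b hbL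
      by_cases hbr : b ∈ radical (N : Set R)
      · have hb0' : mul a b0 ∈ φ N := key0 a haK haN b0 hb0L hb0r
        have hsub : ∀ z ∈ hadd b b0, mul a z ∈ φ N := by
          intro z hz
          have hzL : z ∈ (L : Set R) := L.hadd_subset' b hbL b0 hb0L hz
          have hzr : z ∉ radical (N : Set R) := by
            intro hzr
            exact hb0r (radical_hadd_subset N (radical_neg_mem N hbr) hzr
              (reversible b b0 z hz))
          exact key0 a haK haN z hzL hzr
        have himg : hadd (mul a b) (mul a b0) ⊆ φ N := by
          rw [← distrib]
          rintro w ⟨z, hz, rfl⟩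
          exact hsub z hz
        obtain ⟨w, hw⟩ := hadd_nonempty (mul a b) (mul a b0)
        rw [hJ]
        have hwJ : w ∈ (J : Set R) := hJ ▸ himg hw
        have hb0J : mul a b0 ∈ (J : Set R) := hJ ▸ hb0'
        exact mem_hadd_cancel (ideal_neg_mem J) (ideal_hadd_subset J) hw hwJ hb0J
      · exact key0 a haK haN b hbL hbr
    have key2 : ∀ a ∈ (K : Set R), ∀ b ∈ (L : Set R), mul a b ∈ φ N := by
      intro a haK b hbL
      by_cases haN : a ∈ (N : Set R)
      · have ha0' : mul a0 b ∈ φ N := key1 a0 ha0K ha0N b hbL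
        have hsub : ∀ z ∈ hadd a a0, mul z b ∈ φ N := by
          intro z hz
          have hzK : z ∈ (K : Set R) := K.hadd_subset' a haK a0 ha0K hz
          have hzN : z ∉ (N : Set R) := by
            intro hzN
            exact ha0N (mem_hadd_cancel (ideal_neg_mem N) (ideal_hadd_subset N)
              (hadd_comm_mem hz) hzN haN)
          exact key1 z hzK hzN b hbL
        have himg : hadd (mul b a) (mul b a0) ⊆ φ N := by
          rw [← distrib]
          rintro w ⟨z, hz, rfl⟩
          show mul b z ∈ φ N
          rw [mul_comm b z]
          exact hsub z hz
        obtain ⟨w, hw⟩ := hadd_nonempty (mul b a) (mul b a0)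
        have hwJ : w ∈ (J : Set R) := hJ ▸ himg hw
        have ha0J : mul b a0 ∈ (J : Set R) := by rw [mul_comm b a0]; exact hJ ▸ ha0'
        have : mul b a ∈ (J : Set R) :=
          mem_hadd_cancel (ideal_neg_mem J) (ideal_hadd_subset J) hw hwJ ha0J
        rw [hJ, mul_comm a b]
        exact this
      · exact key1 a haK haN b hbL
    apply hnsub
    rintro x ⟨a, haK, b, hbL, rfl⟩
    exact key2 a haK b hbL
  -- (iv) → (i)
  have h41 : (∀ K L : Hyperideal R, mulSet (K : Set R) (L : Set R) ⊆ (N : Set R) →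
        ¬ mulSet (K : Set R) (L : Set R) ⊆ φ N →
        (K : Set R) ⊆ (N : Set R) ∨ (L : Set R) ⊆ radical (N : Set R)) →
      IsPhiPrimary φ N := by
    intro h4
    refine ⟨hN, ?_⟩
    intro a b hab hnφ
    have hsub : mulSet ((principal a : Hyperideal R) : Set R)
        ((principal b : Hyperideal R) : Set R) ⊆ (N : Set R) := by
      rintro x ⟨u, ⟨r, rfl⟩, v, ⟨s, rfl⟩, rfl⟩
      have he : mul (mul r a) (mul s b) = mul (mul r s) (mul a b) := by
        rw [mul_assoc r a (mul s b), mul_comm s b, ← mul_assoc a b s,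
          mul_comm (mul a b) s, ← mul_assoc r s (mul a b)]
      rw [he]
      exact N.mul_mem' _ _ hab
    have hnsub : ¬ mulSet ((principal a : Hyperideal R) : Set R)
        ((principal b : Hyperideal R) : Set R) ⊆ φ N := by
      intro h
      exact hnφ (h ⟨a, mem_principal_self a, b, mem_principal_self b, rfl⟩)
    rcases h4 (principal a) (principal b) hsub hnsub with h | h
    · exact Or.inl (h (mem_principal_self a))
    · exact Or.inr (h (mem_principal_self b))
  exact ⟨⟨h12, fun h => h31 (h23 h)⟩,
    ⟨fun h => h23 (h12 h), h31⟩,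
    ⟨h14, h41⟩⟩

end KrasnerHyperring
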